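/- In the gambling MDP with data-collection policy choosing each of a₀, a₁, a₂ with probability 1/3, the conditional distribution of the action given that the realized return equals 1 assigns probability 1/3 to a₁ and 2/3 to a₂, and the expected return of the return-conditioned policy (which samples an action from this conditional distribution and executes it in the true environment) is (1/3)·(−5/2) + (2/3)·1 = −1/6. -/

import Mathlib

namespace Stmt3
inductive Act | a0 | a1 | a2
  deriving DecidableEq

instance instFintypeAct : Fintype Act :=
  ⟨({.a0, .a1, .a2} : Finset Act), by intro x; cases x <;> simp⟩

noncomputable def rewardP : Act → ℝ → ℝ
  | .a0, r => if r = 5 then 1/2 else if r = -15 then 1/2 else 0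
  | .a1, r => if r = 1 then 1/2 else if r = -6 then 1/2 else 0
  | .a2, r => if r = 1 then 1 else 0

noncomputable def expRet (a : Act) : ℝ :=
  ∑ r ∈ ({5, -15, 1, -6} : Finset ℝ), rewardP a r * r

/-- Joint distribution over (action, reward) induced by the uniform data policy. -/
noncomputable def joint (a : Act) (r : ℝ) : ℝ := (1/3) * rewardP a r

/-- The return-conditioned policy: `π(a) = P(action = a | reward = 1)`. -/
noncomputable def condPolicy (a : Act) : ℝ := joint a 1 / ∑ b : Act, joint b 1

lemma sum_act (f : Act → ℝ) : ∑ a : Act, f a = f .a0 + f .a1 + f .a2 := by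
  have : (Finset.univ : Finset Act) = {.a0, .a1, .a2} := by decide
  rw [this]
  simp [Finset.sum_insert, Finset.mem_insert]
  ring

lemma expRet0 : expRet .a0 = -5 := by norm_num [expRet, rewardP, Finset.sum_insert]
lemma expRet1 : expRet .a1 = -5/2 := by norm_num [expRet, rewardP, Finset.sum_insert]
lemma expRet2 : expRet .a2 = 1 := by norm_num [expRet, rewardP, Finset.sum_insert]

lemma hsum : (∑ b : Act, joint b 1) = 1/2 := by
  rw [sum_act]; norm_num [joint, rewardP]

theorem stmt_3 :
    condPolicy .a0 = 0 ∧ condPolicy .a1 = 1/3 ∧ condPolicy .a2 = 2/3 ∧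
    ∑ a : Act, condPolicy a * expRet a = (1/3) * (-5/2) + (2/3) * 1 ∧
    ∑ a : Act, condPolicy a * expRet a = -1/6 := by
  have h0 : condPolicy .a0 = 0 := by unfold condPolicy; rw [hsum]; norm_num [joint, rewardP]
  have h1 : condPolicy .a1 = 1/3 := by unfold condPolicy; rw [hsum]; norm_num [joint, rewardP]
  have h2 : condPolicy .a2 = 2/3 := by unfold condPolicy; rw [hsum]; norm_num [joint, rewardP]
  refine ⟨h0, h1, h2, ?_, ?_⟩ <;>
    rw [sum_act] <;> rw [h0, h1, h2, expRet0, expRet1, expRet2] <;> norm_num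
end Stmt3
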